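/- Let A be a type with two binary operations | and ∗. If axiom C7 ((x∗y) | y = x for all x, y) and axiom C4 ((a|b)∗(c|d) = (a∗c)|(b∗d) for all a,b,c,d) hold, then axiom C6 holds: (x|y) ∗ y = x for all x, y. (Lemma 2.1.3(d).) -/
import Mathlib

/-- Lemma 2.1.3(d): axioms C7 and C4 imply axiom C6. -/
theorem conway_C7_C4_imp_C6 {A : Type*} (bar ast : A → A → A)
    (hC7 : ∀ x y : A, bar (ast x y) y = x)
    (hC4 : ∀ a b c d : A, ast (bar a b) (bar c d) = bar (ast a c) (ast b d)) :
    ∀ x y : A, ast (bar x y) y = x := by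
  intro x y
  calc ast (bar x y) y = ast (bar x y) (bar (ast y y) y) := by rw [hC7]
    _ = bar (ast x (ast y y)) (ast y y) := hC4 x y (ast y y) y
    _ = x := hC7 x (ast y y)
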